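/- (Inversion for abstraction) If Γ ⊢ λx.t : T is derivable, then there exist m ≥ 1 and types T_i, T'_i (i ∈ 1..m) such that T ≡ ⋀_{i∈1..m} (T_i → T'_i)^0 and Γ, x:T_i ⊢ t : T'_i for each i. -/

import Mathlib

set_option linter.unusedVariables false

-- Primitive types and term types of the unbind/rebind calculus.
mutual
inductive PrimTy : Type where
  | int : PrimTy
  | code : PrimTy
  | arrow : Ty → Ty → PrimTy
inductive Ty : Type where
  | prim : PrimTy → ℕ → Ty
  | inter : Ty → Ty → Ty
end

/-- `T.raise k` increases all top-level conjunct levels by `k` (written `T^{+k}`). -/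
def Ty.raise : Ty → ℕ → Ty
  | .prim τ ℓ, k => .prim τ (ℓ + k)
  | .inter T1 T2, k => .inter (T1.raise k) (T2.raise k)

/-- Congruence on types. -/
inductive TyEq : Ty → Ty → Prop where
  | refl : TyEq T T
  | symm : TyEq T1 T2 → TyEq T2 T1
  | trans : TyEq T1 T2 → TyEq T2 T3 → TyEq T1 T3
  | interCongr : TyEq T1 T1' → TyEq T2 T2' → TyEq (.inter T1 T2) (.inter T1' T2')
  | arrowCongr : TyEq T1 T1' → TyEq T2 T2' →
      TyEq (.prim (.arrow T1 T2) ℓ) (.prim (.arrow T1' T2') ℓ)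
  | idem : TyEq T (.inter T T)
  | comm : TyEq (.inter T1 T2) (.inter T2 T1)
  | assoc : TyEq (.inter T1 (.inter T2 T3)) (.inter (.inter T1 T2) T3)
  | distrib : TyEq (.inter (.prim (.arrow T T1) ℓ) (.prim (.arrow T T2) ℓ))
      (.prim (.arrow T (.inter T1 T2)) ℓ)
  | shift : TyEq (.prim (.arrow T' (Ty.raise T ℓ')) (ℓ+1)) (.prim (.arrow T' (Ty.raise T (ℓ'+1))) ℓ)

/-- Subtyping on types. -/
inductive TySub : Ty → Ty → Prop where
  | int : TySub (.prim .int ℓ) (.prim .int (ℓ+1))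
  | interElim : TySub (.inter T1 T2) T1
  | arrow : TySub T2 T1 → TySub T1' T2' →
      TySub (.prim (.arrow T1 T1') ℓ) (.prim (.arrow T2 T2') ℓ)
  | mono : TySub T1 T1' → TySub T2 T2' → TySub (.inter T1 T2) (.inter T1' T2')
  | trans : TySub T1 T2 → TySub T2 T3 → TySub T1 T3
  | ofEq : TyEq T1 T2 → TySub T1 T2

/-- Value types: intersections with at least one conjunct of level 0. -/
inductive IsValueTy : Ty → Prop where
  | prim : IsValueTy (.prim τ 0)
  | inter : IsValueTy V → IsValueTy (.inter V T)

/-- `bigInter T Ts` is the intersection of the nonempty family `T :: Ts`. -/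
def bigInter : Ty → List Ty → Ty
  | T, [] => T
  | T, T' :: Ts => .inter T (bigInter T' Ts)

abbrev TCtx := List (String × Ty)

/-- Terms of the unbind/rebind calculus. -/
inductive Tm : Type where
  | var : String → Tm
  | num : ℤ → Tm
  | add : Tm → Tm → Tm
  | lam : String → Tm → Tm
  | app : Tm → Tm → Tm
  | unbind : TCtx → Tm → Tm
  | rebind : Tm → List (String × Ty × Tm) → Tm
  | error : Tm

abbrev TSubst := List (String × Ty × Tm)
abbrev USubst := List (String × Tm)

inductive IsValue : Tm → Prop where
  | lam : IsValue (.lam x t)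
  | unbind : IsValue (.unbind Γ t)
  | num : IsValue (.num n)

mutual
/-- Free variables of a term. -/
def FV : Tm → Finset String
  | .var x => {x}
  | .num _ => ∅
  | .add t1 t2 => FV t1 ∪ FV t2
  | .lam x t => FV t \ {x}
  | .app t1 t2 => FV t1 ∪ FV t2
  | .unbind Γ' t => FV t \ (Γ'.map Prod.fst).toFinset
  | .rebind t r => FV t ∪ FVr r
  | .error => ∅
/-- Free variables of a typed substitution. -/
def FVr : List (String × Ty × Tm) → Finset String
  | [] => ∅
  | p :: r => FV p.2.2 ∪ FVr r
end

/-- Free variables of an untyped substitution. -/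
def FVu (σ : USubst) : Finset String := σ.foldr (fun p acc => FV p.2 ∪ acc) ∅

mutual
/-- `SubstM t σ t'` : the (capture-avoiding, partial) application of the
substitution `σ` to `t` is defined and equals `t'`. -/
inductive SubstM : Tm → USubst → Tm → Prop where
  | varHit : σ.lookup x = some v → SubstM (.var x) σ v
  | varMiss : σ.lookup x = none → SubstM (.var x) σ (.var x)
  | num : SubstM (.num n) σ (.num n)
  | error : SubstM .error σ .error
  | add : SubstM t1 σ t1' → SubstM t2 σ t2' → SubstM (.add t1 t2) σ (.add t1' t2')
  | app : SubstM t1 σ t1' → SubstM t2 σ t2' → SubstM (.app t1 t2) σ (.app t1' t2')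
  | lam : x ∉ FVu σ → SubstM t (σ.filter (fun p => p.1 != x)) t' →
      SubstM (.lam x t) σ (.lam x t')
  | unbind : (∀ y ∈ Γ'.map Prod.fst, y ∉ FVu σ) →
      SubstM t (σ.filter (fun p => !(Γ'.map Prod.fst).contains p.1)) t' →
      SubstM (.unbind Γ' t) σ (.unbind Γ' t')
  | rebind : SubstM t σ t' → SubstML r σ r' → SubstM (.rebind t r) σ (.rebind t' r')
inductive SubstML : TSubst → USubst → TSubst → Prop where
  | nil : SubstML [] σ []
  | cons : SubstM u σ u' → SubstML r σ r' → SubstML ((x,T,u) :: r) σ ((x,T,u') :: r')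
end

mutual
/-- The intersection type system with levels. -/
inductive Typed : TCtx → Tm → Ty → Prop where
  | var : Γ.lookup x = some T → Typed Γ (.var x) T
  | num : Typed Γ (.num n) (.prim .int 0)
  | sum : Typed Γ t1 (.prim .int ℓ) → Typed Γ t2 (.prim .int ℓ) →
      Typed Γ (.add t1 t2) (.prim .int ℓ)
  | error : Typed Γ .error T
  | abs : Γ.lookup x = none → Typed ((x,T) :: Γ) t T' →
      Typed Γ (.lam x t) (.prim (.arrow T T') 0)
  | app : Typed Γ t1 (.prim (.arrow V T) 0) → IsValueTy V → Typed Γ t2 V →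
      Typed Γ (.app t1 t2) T
  | unbind0 : (∀ x ∈ Γ'.map Prod.fst, Γ.lookup x = none) → Typed (Γ' ++ Γ) t T →
      Typed Γ (.unbind Γ' t) (.prim .code 0)
  | unbind : (∀ x ∈ Γ'.map Prod.fst, Γ.lookup x = none) → Typed (Γ' ++ Γ) t T →
      Typed Γ (.unbind Γ' t) (T.raise 1)
  | rebind : Typed Γ t (T.raise 1) → SubstOk Γ r → Typed Γ (.rebind t r) T
  | inter : Typed Γ t T1 → Typed Γ t T2 → Typed Γ t (.inter T1 T2)
  | sub : Typed Γ t T → TySub T T' → Typed Γ t T'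
/-- `SubstOk Γ r` : the typed substitution `r` is well typed in `Γ`. -/
inductive SubstOk : TCtx → TSubst → Prop where
  | nil : SubstOk Γ []
  | cons : Typed Γ u V → IsValueTy V → TySub V T → SubstOk Γ r →
      SubstOk Γ ((x,T,u) :: r)
end

/-- All terms of a typed substitution are values. -/
def IsValSubst (r : TSubst) : Prop := ∀ p ∈ r, IsValue p.2.2

/-- `Γ' ⊆` the type context extracted from `r`. -/
def CtxSub (Γ' : TCtx) (r : TSubst) : Prop := ∀ x T, (x,T) ∈ Γ' → ∃ u, (x,T,u) ∈ r

/-- The untyped substitution extracted from `r`, restricted to variables in `xs`. -/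
def restrictTo (r : TSubst) (xs : List String) : USubst :=
  (r.filter (fun p => xs.contains p.1)).map (fun p => (p.1, p.2.2))

/-- Evaluation contexts. -/
inductive ECtx : Type where
  | hole : ECtx
  | addL : ECtx → Tm → ECtx
  | addR : ℤ → ECtx → ECtx
  | appL : ECtx → Tm → ECtx
  | appR : Tm → ECtx → ECtx
  | reb : Tm → TSubst → String → Ty → ECtx → ECtx

def plug : ECtx → Tm → Tm
  | .hole, u => u
  | .addL E t, u => .add (plug E u) t
  | .addR n E, u => .add (.num n) (plug E u)
  | .appL E t, u => .app (plug E u) t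
  | .appR v E, u => .app v (plug E u)
  | .reb t r x T E, u => .rebind t (r ++ [(x, T, plug E u)])

/-- Well-formed evaluation contexts (`v E` requires `v` a value). -/
inductive IsECtx : ECtx → Prop where
  | hole : IsECtx .hole
  | addL : IsECtx E → IsECtx (.addL E t)
  | addR : IsECtx E → IsECtx (.addR n E)
  | appL : IsECtx E → IsECtx (.appL E t)
  | appR : IsValue v → IsECtx E → IsECtx (.appR v E)
  | reb : IsECtx E → IsECtx (.reb t r x T E)

/-- Call-by-value reduction. -/
inductive Step : Tm → Tm → Prop where
  | sum : Step (.add (.num n1) (.num n2)) (.num (n1 + n2))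
  | app : IsValue v → SubstM t [(x, v)] t' → Step (.app (.lam x t) v) t'
  | rebindUnbindYes : IsValSubst r → CtxSub Γ' r →
      SubstM t (restrictTo r (Γ'.map Prod.fst)) t' →
      Step (.rebind (.unbind Γ' t) r) t'
  | rebindUnbindNo : IsValSubst r → ¬ CtxSub Γ' r →
      Step (.rebind (.unbind Γ' t) r) .error
  | rebindNum : IsValSubst r → Step (.rebind (.num n) r) (.num n)
  | rebindSum : IsValSubst r →
      Step (.rebind (.add t1 t2) r) (.add (.rebind t1 r) (.rebind t2 r))
  | rebindAbs : IsValSubst r → Step (.rebind (.lam x t) r) (.lam x (.rebind t r))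
  | rebindApp : IsValSubst r →
      Step (.rebind (.app t1 t2) r) (.app (.rebind t1 r) (.rebind t2 r))
  | rebindRebind : IsValSubst rv → Step (.rebind t r) t' →
      Step (.rebind (.rebind t r) rv) (.rebind t' rv)
  | rebindError : IsValSubst r → Step (.rebind .error r) .error
  | ctx : E ≠ .hole → IsECtx E → Step t t' → Step (plug E t) (plug E t')
  | ctxError : E ≠ .hole → IsECtx E → Step t .error → Step (plug E t) .error

/-- Level-0 arrow type from a pair of types. -/
def arr0 (p : Ty × Ty) : Ty := .prim (.arrow p.1 p.2) 0

/-- Primitive type with a level. -/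
def primL (p : PrimTy × ℕ) : Ty := .prim p.1 p.2

-- Auxiliary lemmas for stmt6

lemma Ty.raise_zero : ∀ (T : Ty), T.raise 0 = T
  | .prim _ _ => rfl
  | .inter T1 T2 => by simp [Ty.raise, Ty.raise_zero T1, Ty.raise_zero T2]

lemma Ty.raise_raise : ∀ (T : Ty) (a b : ℕ), (T.raise a).raise b = T.raise (a + b)
  | .prim _ _, _, _ => by simp [Ty.raise, Nat.add_assoc]
  | .inter T1 T2, a, b => by
      simp [Ty.raise, Ty.raise_raise T1 a b, Ty.raise_raise T2 a b]

lemma TyEq.raise {A B : Ty} (h : TyEq A B) (k : ℕ) : TyEq (A.raise k) (B.raise k) := by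
  induction h with
  | refl => exact .refl
  | symm _ ih => exact ih.symm
  | trans _ _ ih1 ih2 => exact ih1.trans ih2
  | interCongr _ _ ih1 ih2 => exact .interCongr ih1 ih2
  | arrowCongr h1 h2 => exact TyEq.arrowCongr h1 h2
  | idem => exact .idem
  | comm => exact .comm
  | assoc => exact .assoc
  | distrib => exact .distrib
  | @shift T' T ℓ' ℓ =>
      show TyEq (.prim (.arrow T' (Ty.raise T ℓ')) (ℓ+1+k)) (.prim (.arrow T' (Ty.raise T (ℓ'+1))) (ℓ+k))
      rw [show ℓ + 1 + k = (ℓ + k) + 1 from by omega]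
      exact TyEq.shift

lemma TySub.raise {A B : Ty} (h : TySub A B) (k : ℕ) : TySub (A.raise k) (B.raise k) := by
  induction h with
  | @int ℓ =>
      show TySub (.prim .int (ℓ+k)) (.prim .int (ℓ+1+k))
      rw [show ℓ + 1 + k = (ℓ + k) + 1 from by omega]
      exact TySub.int
  | interElim => exact .interElim
  | arrow h1 h2 => exact .arrow h1 h2
  | mono _ _ ih1 ih2 => exact .mono ih1 ih2
  | trans _ _ ih1 ih2 => exact ih1.trans ih2
  | ofEq h => exact .ofEq (h.raise k)

/-- Every arrow of any level is congruent to a level-0 arrow with raised codomain. -/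
lemma arrowShift (A B : Ty) (ℓ : ℕ) :
    TyEq (.prim (.arrow A B) ℓ) (.prim (.arrow A (B.raise ℓ)) 0) := by
  induction ℓ generalizing B with
  | zero => rw [B.raise_zero]; exact .refl
  | succ n ih =>
      have h1 : TyEq (.prim (.arrow A B) (n+1)) (.prim (.arrow A (B.raise 1)) n) := by
        have := @TyEq.shift A B 0 n
        rw [B.raise_zero] at this
        exact this
      have h2 := ih (B.raise 1)
      rw [Ty.raise_raise, show 1 + n = n + 1 from by omega] at h2
      exact h1.trans h2

lemma lookup_append (Δ L : TCtx) (y : String) :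
    (Δ ++ L).lookup y = (Δ.lookup y).or (L.lookup y) := by
  induction Δ with
  | nil => simp
  | cons a Δ ih =>
      obtain ⟨k, v⟩ := a
      simp only [List.cons_append, List.lookup]
      split <;> simp [ih]
lemma lookup_none_swap {Γ : TCtx} {x y : String} {A A' : Ty} :
    ∀ (Δ : TCtx), (Δ ++ (x,A)::Γ).lookup y = none → (Δ ++ (x,A')::Γ).lookup y = none
  | [] => by
      intro h
      simp only [List.nil_append, List.lookup] at h ⊢
      cases hyx : (y == x) <;> simp only [hyx] at h ⊢ <;> first | exact h | cases h
  | (k,v) :: Δ => by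
      intro h
      simp only [List.cons_append, List.lookup] at h ⊢
      cases hyx : (y == k) <;> simp only [hyx] at h ⊢
      · exact lookup_none_swap Δ h
      · cases h

lemma lookup_some_swap {Γ : TCtx} {x y : String} {A A' T : Ty} :
    ∀ (Δ : TCtx), (Δ ++ (x,A)::Γ).lookup y = some T →
    (Δ ++ (x,A')::Γ).lookup y = some T ∨
      (T = A ∧ (Δ ++ (x,A')::Γ).lookup y = some A')
  | [] => by
      intro h
      simp only [List.nil_append, List.lookup] at h ⊢
      cases hyx : (y == x) <;> simp only [hyx] at h ⊢
      · exact Or.inl h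
      · exact Or.inr ⟨(Option.some_inj.mp h).symm, by trivial⟩
  | (k,v) :: Δ => by
      intro h
      simp only [List.cons_append, List.lookup] at h ⊢
      cases hyx : (y == k) <;> simp only [hyx] at h ⊢
      · exact lookup_some_swap Δ h
      · exact Or.inl h

lemma narrow_main (x : String) (A A' : Ty) (Γ : TCtx) (hAA : TySub A' A)
    {Γ0 : TCtx} {t : Tm} {B : Ty} (h : Typed Γ0 t B) :
    ∀ Δ, Γ0 = Δ ++ (x,A)::Γ → Typed (Δ ++ (x,A')::Γ) t B := by
  induction h using Typed.rec
    (motive_2 := fun Γ0 r _ => ∀ Δ, Γ0 = Δ ++ (x,A)::Γ → SubstOk (Δ ++ (x,A')::Γ) r) with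
  | var hl =>
      intro Δ hE; subst hE
      rcases lookup_some_swap _ hl with h' | ⟨hTA, h'⟩
      · exact Typed.var h'
      · exact Typed.sub (Typed.var h') (hTA ▸ hAA)
  | num => intro Δ hE; exact Typed.num
  | sum _ _ ih1 ih2 => intro Δ hE; exact Typed.sum (ih1 Δ hE) (ih2 Δ hE)
  | error => intro Δ hE; exact Typed.error
  | abs hnone _ ih =>
      intro Δ hE; subst hE
      exact Typed.abs (lookup_none_swap _ hnone) (ih ((_, _) :: Δ) rfl)
  | app _ hV _ ih1 ih2 =>
      intro Δ hE; exact Typed.app (ih1 Δ hE) hV (ih2 Δ hE)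
  | unbind0 hnone _ ih =>
      intro Δ hE; subst hE
      apply Typed.unbind0 (fun y hy => lookup_none_swap _ (hnone y hy))
      rw [← List.append_assoc]
      exact ih _ (List.append_assoc _ _ _).symm
  | unbind hnone _ ih =>
      intro Δ hE; subst hE
      apply Typed.unbind (fun y hy => lookup_none_swap _ (hnone y hy))
      rw [← List.append_assoc]
      exact ih _ (List.append_assoc _ _ _).symm
  | rebind _ _ ih1 ih2 =>
      intro Δ hE; exact Typed.rebind (ih1 Δ hE) (ih2 Δ hE)
  | inter _ _ ih1 ih2 =>
      intro Δ hE; exact Typed.inter (ih1 Δ hE) (ih2 Δ hE)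
  | sub _ hs ih => intro Δ hE; exact Typed.sub (ih Δ hE) hs
  | nil => exact SubstOk.nil
  | cons _ hV hs _ ih1 ih2 =>
      rename_i Δ hE
      exact SubstOk.cons (ih1 Δ hE) hV hs (ih2 Δ hE)

lemma narrow {x : String} {A A' : Ty} {Γ : TCtx} {t : Tm} {B : Ty}
    (hAA : TySub A' A) (h : Typed ((x,A)::Γ) t B) : Typed ((x,A')::Γ) t B :=
  narrow_main x A A' Γ hAA h [] rfl
/-- Semantic interpretation: `T` is (equivalent to) an intersection of level-0
arrows, each of which types the body appropriately. -/
def Sem (Γ : TCtx) (x : String) (t : Tm) : Ty → Prop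
  | .prim (.arrow A B) ℓ => Typed ((x,A)::Γ) t (B.raise ℓ)
  | .prim .int _ => False
  | .prim .code _ => False
  | .inter T1 T2 => Sem Γ x t T1 ∧ Sem Γ x t T2

lemma sem_tyEq {Γ : TCtx} {x : String} {t : Tm} {T1 T2 : Ty} (h : TyEq T1 T2) :
    Sem Γ x t T1 ↔ Sem Γ x t T2 := by
  induction h with
  | refl => exact Iff.rfl
  | symm _ ih => exact ih.symm
  | trans _ _ ih1 ih2 => exact ih1.trans ih2
  | interCongr _ _ ih1 ih2 => exact and_congr ih1 ih2
  | arrowCongr h1 h2 =>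
      constructor
      · intro hT
        exact Typed.sub (narrow (TySub.ofEq h1.symm) hT) (TySub.ofEq (h2.raise _))
      · intro hT
        exact Typed.sub (narrow (TySub.ofEq h1) hT) (TySub.ofEq ((h2.raise _).symm))
  | idem => exact ⟨fun h => ⟨h, h⟩, fun h => h.1⟩
  | comm => exact And.comm
  | assoc => exact (and_assoc).symm
  | distrib =>
      show Typed _ _ _ ∧ Typed _ _ _ ↔ Typed _ _ (Ty.raise (.inter _ _) _)
      constructor
      · intro ⟨h1, h2⟩
        exact Typed.inter h1 h2
      · intro h
        exact ⟨Typed.sub h TySub.interElim,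
          Typed.sub h (TySub.trans (TySub.ofEq TyEq.comm) TySub.interElim)⟩
  | @shift T' T ℓ' ℓ =>
      show Typed _ _ ((T.raise ℓ').raise (ℓ+1)) ↔ Typed _ _ ((T.raise (ℓ'+1)).raise ℓ)
      rw [Ty.raise_raise, Ty.raise_raise, show ℓ' + (ℓ+1) = (ℓ'+1) + ℓ from by omega]

lemma sem_tySub {Γ : TCtx} {x : String} {t : Tm} {T1 T2 : Ty} (h : TySub T1 T2) :
    Sem Γ x t T1 → Sem Γ x t T2 := by
  induction h with
  | int => exact fun h => h.elim
  | interElim => exact fun h => h.1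
  | arrow h1 h2 =>
      intro hT
      exact Typed.sub (narrow h1 hT) (h2.raise _)
  | mono _ _ ih1 ih2 => exact fun h => ⟨ih1 h.1, ih2 h.2⟩
  | trans _ _ ih1 ih2 => exact fun h => ih2 (ih1 h)
  | ofEq h => exact (sem_tyEq h).mp

lemma bigInter_append (A B : Ty) (l1 l2 : List Ty) :
    TyEq (.inter (bigInter A l1) (bigInter B l2)) (bigInter A (l1 ++ B :: l2)) := by
  induction l1 generalizing A with
  | nil => exact .refl
  | cons C l1 ih =>
      show TyEq (.inter (.inter A (bigInter C l1)) (bigInter B l2)) _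
      exact (TyEq.assoc.symm).trans (TyEq.interCongr .refl (ih C))

lemma sem_good {Γ : TCtx} {x : String} {t : Tm} :
    ∀ (T : Ty), Sem Γ x t T →
    ∃ (p : Ty × Ty) (ps : List (Ty × Ty)),
      TyEq T (bigInter (arr0 p) (ps.map arr0)) ∧
      ∀ q ∈ p :: ps, Typed ((x, q.1) :: Γ) t q.2
  | .prim .int _, h => h.elim
  | .prim .code _, h => h.elim
  | .prim (.arrow A B) ℓ, h => by
      refine ⟨(A, B.raise ℓ), [], ?_, ?_⟩
      · exact arrowShift A B ℓ
      · intro q hq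
        simp only [List.mem_singleton] at hq
        subst hq
        exact h
  | .inter T1 T2, h => by
      obtain ⟨p1, ps1, he1, ht1⟩ := sem_good T1 h.1
      obtain ⟨p2, ps2, he2, ht2⟩ := sem_good T2 h.2
      refine ⟨p1, ps1 ++ p2 :: ps2, ?_, ?_⟩
      · have := bigInter_append (arr0 p1) (arr0 p2) (ps1.map arr0) (ps2.map arr0)
        rw [show (ps1.map arr0) ++ (arr0 p2) :: (ps2.map arr0)
              = (ps1 ++ p2 :: ps2).map arr0 from by simp] at this
        exact (TyEq.interCongr he1 he2).trans this
      · intro q hq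
        rcases List.mem_cons.mp hq with h' | h'
        · exact h' ▸ ht1 p1 (List.mem_cons_self)
        · rcases List.mem_append.mp h' with h'' | h''
          · exact ht1 q (List.mem_cons_of_mem _ h'')
          · rcases List.mem_cons.mp h'' with h3 | h3
            · exact h3 ▸ ht2 p2 (List.mem_cons_self)
            · exact ht2 q (List.mem_cons_of_mem _ h3)

lemma typed_lam_sem {Γ0 : TCtx} {s : Tm} {T : Ty} (h : Typed Γ0 s T) :
    ∀ x t, s = .lam x t → Sem Γ0 x t T := by
  induction h using Typed.rec (motive_2 := fun _ _ _ => True) with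
  | var _ => intro x t hE; cases hE
  | num => intro x t hE; cases hE
  | sum _ _ _ _ => intro x t hE; cases hE
  | error => intro x t hE; cases hE
  | abs hnone hbody _ =>
      intro x t hE
      cases hE
      show Typed _ _ (Ty.raise _ 0)
      rw [Ty.raise_zero]
      exact hbody
  | app _ _ _ _ _ => intro x t hE; cases hE
  | unbind0 _ _ _ => intro x t hE; cases hE
  | unbind _ _ _ => intro x t hE; cases hE
  | rebind _ _ _ _ => intro x t hE; cases hE
  | inter _ _ ih1 ih2 => intro x t hE; exact ⟨ih1 x t hE, ih2 x t hE⟩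
  | sub _ hs ih => intro x t hE; exact sem_tySub hs (ih x t hE)
  | nil => trivial
  | cons _ _ _ _ _ _ => trivial
/-- inversion for abstraction. -/
theorem stmt6 (Γ : TCtx) (x : String) (t : Tm) (T : Ty)
    (h : Typed Γ (.lam x t) T) :
    ∃ (p : Ty × Ty) (ps : List (Ty × Ty)),
      TyEq T (bigInter (arr0 p) (ps.map arr0)) ∧
      ∀ q ∈ p :: ps, Typed ((x, q.1) :: Γ) t q.2 :=
  sem_good T (typed_lam_sem h x t rfl)
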